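/- Let N ≥ 1 and ℓ_1, ℓ_2, ℓ_3 be positive integers with ℓ_i ≤ N for i = 1,2,3 and ℓ_i + ℓ_j ≥ N for all 1 ≤ i < j ≤ 3. Define the height functions v, h : {0,1,…,ℓ_1} → ℕ by v(k) = |{(x_1,x_2) ∈ ℕ_0² : x_1 = k, x_2 ≤ ℓ_2, N−ℓ_3 ≤ x_1+x_2 ≤ N}| and h(k) = min(ℓ_2, ℓ_3, ⌊(ℓ_2+ℓ_3−k)/2⌋, ℓ_1+ℓ_2+ℓ_3−N−k, N−k) + 1. Then there exists a permutation τ of {0,1,…,ℓ_1} such that v(τ(k)) = h(k) for every k ∈ {0,1,…,ℓ_1}. -/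

import Mathlib

open Finset

/-- The height function of the hexagonal domain `V_{ℓ,N}²`: the number of lattice
points of `V_{ℓ,N}²` on the vertical line `x₁ = k`. -/
def vHeight (N ℓ₂ ℓ₃ : ℕ) (k : ℕ) : ℕ :=
  ((Finset.range (ℓ₂ + 1)).filter fun x₂ => N - ℓ₃ ≤ k + x₂ ∧ k + x₂ ≤ N).card

/-- The height function of the index set `H_{ℓ,N}²`. -/
def hHeight (N ℓ₁ ℓ₂ ℓ₃ : ℕ) (k : ℕ) : ℕ :=
  min (min (min (min ℓ₂ ℓ₃) ((ℓ₂ + ℓ₃ - k) / 2)) (ℓ₁ + ℓ₂ + ℓ₃ - N - k)) (N - k) + 1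

/-- Closed formula for `vHeight`. -/
lemma vHeight_eq (N ℓ₂ ℓ₃ k : ℕ) (hk : k ≤ N) :
    vHeight N ℓ₂ ℓ₃ k = min ℓ₂ (N - k) + 1 - (N - ℓ₃ - k) := by
  unfold vHeight
  have h : (Finset.range (ℓ₂ + 1)).filter (fun x₂ => N - ℓ₃ ≤ k + x₂ ∧ k + x₂ ≤ N)
      = Finset.Icc (N - ℓ₃ - k) (min ℓ₂ (N - k)) := by
    ext x
    simp only [Finset.mem_filter, Finset.mem_range, Finset.mem_Icc]
    omega
  rw [h, Nat.card_Icc]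

/-- Splitting a "survival count" into an exact count plus the next survival count. -/
lemma card_filter_le_split (n a : ℕ) (F : ℕ → ℕ) :
    ((Finset.range n).filter (fun k => a ≤ F k)).card
      = ((Finset.range n).filter (fun k => F k = a)).card
        + ((Finset.range n).filter (fun k => a + 1 ≤ F k)).card := by
  have h : (Finset.range n).filter (fun k => a ≤ F k)
      = ((Finset.range n).filter (fun k => F k = a))
        ∪ ((Finset.range n).filter (fun k => a + 1 ≤ F k)) := by
    rw [← Finset.filter_or]
    exact Finset.filter_congr fun k _ => by omega
  rw [h, Finset.card_union_of_disjoint]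
  exact Finset.disjoint_filter.mpr fun x _ h1 h2 => by omega

theorem stmt16 (N ℓ₁ ℓ₂ ℓ₃ : ℕ) (hN : 1 ≤ N)
    (h₁ : 1 ≤ ℓ₁) (h₂ : 1 ≤ ℓ₂) (h₃ : 1 ≤ ℓ₃)
    (h₁N : ℓ₁ ≤ N) (h₂N : ℓ₂ ≤ N) (h₃N : ℓ₃ ≤ N)
    (h₁₂ : N ≤ ℓ₁ + ℓ₂) (h₁₃ : N ≤ ℓ₁ + ℓ₃) (h₂₃ : N ≤ ℓ₂ + ℓ₃) :
    ∃ τ : Equiv.Perm (Fin (ℓ₁ + 1)), ∀ k : Fin (ℓ₁ + 1),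
      vHeight N ℓ₂ ℓ₃ (τ k : ℕ) = hHeight N ℓ₁ ℓ₂ ℓ₃ (k : ℕ) := by
  set n := ℓ₁ + 1 with hn
  set f : ℕ → ℕ := vHeight N ℓ₂ ℓ₃ with hf
  set g : ℕ → ℕ := hHeight N ℓ₁ ℓ₂ ℓ₃ with hg
  -- survival counts agree
  have hsurv : ∀ t : ℕ,
      ((Finset.range n).filter (fun k => t ≤ f k)).card
        = ((Finset.range n).filter (fun k => t ≤ g k)).card := by
    intro t
    by_cases hc : t ≤ min ℓ₂ ℓ₃ + 1
    · have hv : (Finset.range n).filter (fun k => t ≤ f k)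
          = Finset.Icc (N + t - ℓ₂ - ℓ₃ - 1) (min ℓ₁ (N + 1 - t)) := by
        ext k
        simp only [Finset.mem_filter, Finset.mem_range, Finset.mem_Icc, hf]
        by_cases hk : k ≤ N
        · rw [vHeight_eq N ℓ₂ ℓ₃ k hk]; omega
        · omega
      have hh : (Finset.range n).filter (fun k => t ≤ g k)
          = Finset.Icc 0
              (min (min (min ℓ₁ (ℓ₂ + ℓ₃ + 2 - 2 * t)) (ℓ₁ + ℓ₂ + ℓ₃ + 1 - N - t))
                (N + 1 - t)) := by
        ext k
        simp only [Finset.mem_filter, Finset.mem_range, Finset.mem_Icc, hg, hHeight]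
        omega
      rw [hv, hh, Nat.card_Icc, Nat.card_Icc]
      omega
    · have hv : (Finset.range n).filter (fun k => t ≤ f k) = ∅ := by
        apply Finset.filter_eq_empty_iff.mpr
        intro k hk
        simp only [Finset.mem_range] at hk
        simp only [hf]
        rw [vHeight_eq N ℓ₂ ℓ₃ k (by omega)]
        omega
      have hh : (Finset.range n).filter (fun k => t ≤ g k) = ∅ := by
        apply Finset.filter_eq_empty_iff.mpr
        intro k hk
        simp only [hg, hHeight]
        omega
      rw [hv, hh]
  -- exact counts agree
  have hcount : ∀ a : ℕ,
      ((Finset.range n).filter (fun k => f k = a)).card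
        = ((Finset.range n).filter (fun k => g k = a)).card := by
    intro a
    have h1 := card_filter_le_split n a f
    have h2 := card_filter_le_split n a g
    have h3 := hsurv a
    have h4 := hsurv (a + 1)
    omega
  -- list permutation
  set f₀ : Fin n → ℕ := fun i => f i.val with hf₀
  set g₀ : Fin n → ℕ := fun i => g i.val with hg₀
  have hperm : List.Perm (List.ofFn f₀) (List.ofFn g₀) := by
    rw [List.perm_iff_count]
    intro a
    have hof : ∀ F : ℕ → ℕ, List.ofFn (fun i : Fin n => F i.val) = (List.range n).map F := by
      intro F
      rw [List.ofFn_eq_map, ← List.map_coe_finRange_eq_range, List.map_map]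
      rfl
    rw [hf₀, hg₀, hof f, hof g, List.count_eq_countP, List.count_eq_countP,
      List.countP_map, List.countP_map]
    have hcp : ∀ F : ℕ → ℕ,
        (List.range n).countP ((fun b => b == a) ∘ F)
          = ((Finset.range n).filter (fun k => F k = a)).card := by
      intro F
      rw [Finset.card_filter]
      induction n with
      | zero => simp
      | succ m ih =>
        rw [List.range_succ, List.countP_append, Finset.range_add_one,
          Finset.sum_insert Finset.notMem_range_self, ih]
        simp [List.countP_cons, Function.comp, beq_iff_eq]
        omega
    rw [hcp f, hcp g, hcount a]
  -- monotone rearrangements coincide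
  have hkey : f₀ ∘ Tuple.sort f₀ = g₀ ∘ Tuple.sort g₀ := by
    exact List.ofFn_injective (List.Perm.eq_of_sortedLE
      (Tuple.monotone_sort f₀).sortedLE_ofFn
      (Tuple.monotone_sort g₀).sortedLE_ofFn
      (((Tuple.sort f₀).ofFn_comp_perm f₀).trans
        (hperm.trans ((Tuple.sort g₀).ofFn_comp_perm g₀).symm)))
  refine ⟨(Tuple.sort g₀).symm.trans (Tuple.sort f₀), fun k => ?_⟩
  have : f₀ (Tuple.sort f₀ ((Tuple.sort g₀).symm k)) = g₀ k := by
    have := congrFun hkey ((Tuple.sort g₀).symm k)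
    simpa using this
  simpa using this
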